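/- Let G ⊂ S₄ be either the subgroup generated by a single transposition (i j), or the subgroup generated by two disjoint transpositions (i j) and (k l) (so G ≅ C₂ × C₂), or the stabilizer in S₄ of one letter i (so G ≅ S₃). Then there exists a G-equivariant map from (SO(3), ρ_G) to (S², τ_G); that is, there is a continuous map g : SO(3) → S² satisfying g(A·ι(σ)) = τ(σ)(g(A)) for all σ ∈ G and all A ∈ SO(3). -/
import Mathlib

noncomputable section

/-- `SO(3)`: real orthogonal 3×3 matrices of determinant 1. -/
def SO3 : Set (Matrix (Fin 3) (Fin 3) ℝ) :=
  {A | A * A.transpose = 1 ∧ A.det = 1}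

/-- The unit sphere `S²` in `ℝ³`. -/
def unitSphere : Set (Fin 3 → ℝ) := {x | ∑ i, x i ^ 2 = 1}

/-- The vertices of the regular tetrahedron inscribed in `S²` obtained by choosing one
endpoint of each spatial diagonal of the cube with vertices `(±1/√3, ±1/√3, ±1/√3)`. -/
def tetra : Fin 4 → Fin 3 → ℝ := fun i =>
  (Real.sqrt 3)⁻¹ • (![![1, 1, 1], ![1, -1, -1], ![-1, 1, -1], ![-1, -1, 1]] i)

/-- Given the tetrahedral representation `τ : S₄ → O(3)`, the embedding `ι : S₄ → SO(3)` as the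
rotation group of the cube: `ι σ = τ σ` for `σ` even, and `ι σ = -τ σ` for `σ` odd. -/
def iotaOf (τ : Equiv.Perm (Fin 4) → Matrix (Fin 3) (Fin 3) ℝ)
    (σ : Equiv.Perm (Fin 4)) : Matrix (Fin 3) (Fin 3) ℝ :=
  if Equiv.Perm.sign σ = 1 then τ σ else -(τ σ)

lemma sq_sqrt3 : Real.sqrt 3 ^ 2 = 3 := Real.sq_sqrt (by norm_num)

lemma sqrt3_ne : Real.sqrt 3 ≠ 0 := by positivity

lemma tetra_norm (i : Fin 4) : ∑ k, tetra i k ^ 2 = 1 := by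
  have h := sq_sqrt3
  have h2 := sqrt3_ne
  fin_cases i <;>
    · simp [tetra, Fin.sum_univ_succ]
      field_simp
      norm_num

lemma pair_norm (i j : Fin 4) (hij : i ≠ j) :
    ∑ k, (Real.sqrt 3 / 2 * (tetra i k + tetra j k)) ^ 2 = 1 := by
  have h := sq_sqrt3
  have h2 := sqrt3_ne
  fin_cases i <;> fin_cases j <;> simp_all [tetra, Fin.sum_univ_succ] <;>
    · field_simp
      ring_nf
      simp

theorem exists_equivariant_map_C2_D2_D3
    (τ : Equiv.Perm (Fin 4) → Matrix (Fin 3) (Fin 3) ℝ)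
    (hτorth : ∀ σ, τ σ * (τ σ).transpose = 1)
    (hτ : ∀ σ i, (τ σ).mulVec (tetra i) = tetra (σ i))
    (G : Subgroup (Equiv.Perm (Fin 4)))
    (hG : (∃ i j : Fin 4, i ≠ j ∧ G = Subgroup.closure {Equiv.swap i j}) ∨
      (∃ i j k l : Fin 4, i ≠ j ∧ i ≠ k ∧ i ≠ l ∧ j ≠ k ∧ j ≠ l ∧ k ≠ l ∧
        G = Subgroup.closure {Equiv.swap i j, Equiv.swap k l}) ∨
      (∃ i : Fin 4, ∀ σ : Equiv.Perm (Fin 4), σ ∈ G ↔ σ i = i)) :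
    ∃ g : Matrix (Fin 3) (Fin 3) ℝ → (Fin 3 → ℝ),
      ContinuousOn g SO3 ∧ (∀ A ∈ SO3, g A ∈ unitSphere) ∧
      ∀ σ ∈ G, ∀ A ∈ SO3, g (A * iotaOf τ σ) = (τ σ).mulVec (g A) := by
  -- helper: mulVec of the scaled pair sum
  have key : ∀ (σ : Equiv.Perm (Fin 4)) (i j : Fin 4),
      (τ σ).mulVec ((Real.sqrt 3 / 2) • (tetra i + tetra j)) =
      (Real.sqrt 3 / 2) • (tetra (σ i) + tetra (σ j)) := by
    intro σ i j
    rw [Matrix.mulVec_smul, Matrix.mulVec_add, hτ, hτ]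
  rcases hG with ⟨i, j, hij, rfl⟩ | ⟨i, j, k, l, hij, hik, hil, hjk, hjl, hkl, rfl⟩ | ⟨i, hstab⟩
  · -- single transposition
    refine ⟨fun _ => (Real.sqrt 3 / 2) • (tetra i + tetra j), continuousOn_const, ?_, ?_⟩
    · intro A _
      simp only [unitSphere, Set.mem_setOf_eq, Pi.smul_apply, Pi.add_apply, smul_eq_mul]
      exact pair_norm i j hij
    · intro σ hσ A _
      have hP : (σ i = i ∧ σ j = j) ∨ (σ i = j ∧ σ j = i) := by
        induction hσ using Subgroup.closure_induction with
        | mem x hx =>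
          simp only [Set.mem_singleton_iff] at hx
          subst hx
          right; simp
        | one => left; simp
        | mul x y hx hy px py =>
          rcases px with ⟨p1, p2⟩ | ⟨p1, p2⟩ <;> rcases py with ⟨q1, q2⟩ | ⟨q1, q2⟩ <;>
            simp [Equiv.Perm.mul_apply, q1, q2, p1, p2]
        | inv x hx px =>
          rcases px with ⟨p1, p2⟩ | ⟨p1, p2⟩
          · exact Or.inl ⟨Equiv.Perm.inv_eq_iff_eq.mpr p1.symm,
              Equiv.Perm.inv_eq_iff_eq.mpr p2.symm⟩
          · exact Or.inr ⟨Equiv.Perm.inv_eq_iff_eq.mpr p2.symm,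
              Equiv.Perm.inv_eq_iff_eq.mpr p1.symm⟩
      rw [key]
      rcases hP with ⟨p1, p2⟩ | ⟨p1, p2⟩ <;> rw [p1, p2]
      rw [add_comm]
  · -- two disjoint transpositions
    refine ⟨fun _ => (Real.sqrt 3 / 2) • (tetra i + tetra j), continuousOn_const, ?_, ?_⟩
    · intro A _
      simp only [unitSphere, Set.mem_setOf_eq, Pi.smul_apply, Pi.add_apply, smul_eq_mul]
      exact pair_norm i j hij
    · intro σ hσ A _
      have hP : (σ i = i ∧ σ j = j) ∨ (σ i = j ∧ σ j = i) := by
        induction hσ using Subgroup.closure_induction with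
        | mem x hx =>
          simp only [Set.mem_insert_iff, Set.mem_singleton_iff] at hx
          rcases hx with rfl | rfl
          · right; simp
          · left
            constructor <;> rw [Equiv.swap_apply_of_ne_of_ne] <;> tauto
        | one => left; simp
        | mul x y hx hy px py =>
          rcases px with ⟨p1, p2⟩ | ⟨p1, p2⟩ <;> rcases py with ⟨q1, q2⟩ | ⟨q1, q2⟩ <;>
            simp [Equiv.Perm.mul_apply, q1, q2, p1, p2]
        | inv x hx px =>
          rcases px with ⟨p1, p2⟩ | ⟨p1, p2⟩
          · exact Or.inl ⟨Equiv.Perm.inv_eq_iff_eq.mpr p1.symm,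
              Equiv.Perm.inv_eq_iff_eq.mpr p2.symm⟩
          · exact Or.inr ⟨Equiv.Perm.inv_eq_iff_eq.mpr p2.symm,
              Equiv.Perm.inv_eq_iff_eq.mpr p1.symm⟩
      rw [key]
      rcases hP with ⟨p1, p2⟩ | ⟨p1, p2⟩ <;> rw [p1, p2]
      rw [add_comm]
  · -- stabilizer of a letter
    refine ⟨fun _ => tetra i, continuousOn_const, ?_, ?_⟩
    · intro A _
      exact tetra_norm i
    · intro σ hσ A _
      rw [hτ, (hstab σ).mp hσ]
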